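/- Let L/M be a field extension that is not purely inseparable of finite exponent (i.e., there is no e ∈ ℕ with char M = p > 0 and a^{p^e} ∈ M for all a ∈ L, nor is L = M in characteristic 0 trivially of this form), and suppose L is infinite. Then there does not exist a nonconstant polynomial f ∈ M[x] such that f(d) ∈ M for all but finitely many d ∈ L. -/

import Mathlib

open Polynomial

lemma aux_pow_of_dvd_choose {p m : ℕ} (hp : p.Prime) (hm : 1 ≤ m)
    (h : ∀ k, 0 < k → k < m → p ∣ m.choose k) : ∃ e, m = p ^ e := by
  haveI : Fact p.Prime := ⟨hp⟩
  set e := m.factorization p with he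
  set u := m / p ^ e with hudef
  have hm0 : m ≠ 0 := by omega
  have hmu : p ^ e * u = m := Nat.ordProj_mul_ordCompl_eq_self m p
  have hu : ¬ p ∣ u := Nat.not_dvd_ordCompl hp hm0
  have hpe : 0 < p ^ e := pow_pos hp.pos e
  have hu1 : 1 ≤ u := by
    rcases Nat.eq_zero_or_pos u with h0 | h1
    · rw [h0, mul_zero] at hmu; omega
    · exact h1
  rcases eq_or_lt_of_le hu1 with h1 | h2
  · exact ⟨e, by rw [← hmu, ← h1, mul_one]⟩
  exfalso
  have hlt : p ^ e < m := by nlinarith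
  -- work in (ZMod p)[X]
  have key : ((X + 1 : (ZMod p)[X]) ^ m) = expand (ZMod p) (p ^ e) ((X + 1) ^ u) := by
    rw [map_pow, map_add, expand_X, map_one]
    rw [← hmu, pow_mul, add_pow_char_pow, one_pow]
  have c1 : ((X + 1 : (ZMod p)[X]) ^ m).coeff (p ^ e) = (m.choose (p ^ e) : ZMod p) :=
    coeff_X_add_one_pow _ _ _
  have c2 : (expand (ZMod p) (p ^ e) ((X + 1 : (ZMod p)[X]) ^ u)).coeff (p ^ e)
      = (u : ZMod p) := by
    rw [coeff_expand hpe, if_pos dvd_rfl, Nat.div_self hpe, coeff_X_add_one_pow,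
      Nat.choose_one_right]
  have hz : (m.choose (p ^ e) : ZMod p) = 0 :=
    (ZMod.natCast_eq_zero_iff _ _).mpr (h _ hpe hlt)
  rw [key, c2, hz] at c1
  exact hu ((ZMod.natCast_eq_zero_iff _ _).mp c1)


section Aux

lemma aux_coeff_mem {L : Type*} [Field L] (M : Subfield L) :
    ∀ (n : ℕ) (g : L[X]), g.natDegree ≤ n → ∀ T : Set L, T.Infinite →
      (∀ x ∈ T, x ∈ M) → (∀ x ∈ T, g.eval x ∈ M) → ∀ i, g.coeff i ∈ M := by
  intro n
  induction n with
  | zero =>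
    intro g hg T hT hTM hval i
    obtain ⟨t, ht⟩ := hT.nonempty
    have : g = C (g.coeff 0) := eq_C_of_natDegree_le_zero hg
    rcases Nat.eq_zero_or_pos i with rfl | hi
    · have h2 := hval t ht
      rwa [this, eval_C] at h2
    · rw [this, coeff_C, if_neg (by omega)]
      exact zero_mem M
  | succ n ih =>
    intro g hg T hT hTM hval i
    rcases le_or_gt g.natDegree 0 with h0 | h1
    · -- constant case again
      obtain ⟨t, ht⟩ := hT.nonempty
      have hc : g = C (g.coeff 0) := eq_C_of_natDegree_le_zero h0
      rcases Nat.eq_zero_or_pos i with rfl | hi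
      · have := hval t ht
        rwa [hc, eval_C] at this
      · rw [hc, coeff_C, if_neg (by omega)]
        exact zero_mem M
    · obtain ⟨t, ht⟩ := hT.nonempty
      have hdvd : (X - C t) ∣ (g - C (g.eval t)) :=
        dvd_iff_isRoot.mpr (by simp [IsRoot])
      obtain ⟨q, hq⟩ := hdvd
      have hq0 : q ≠ 0 := by
        rintro rfl
        rw [mul_zero, sub_eq_zero] at hq
        rw [hq, natDegree_C] at h1
        omega
      have hdeg : q.natDegree ≤ n := by
        have h2 : (g - C (g.eval t)).natDegree = g.natDegree := natDegree_sub_C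
        have h3 : ((X - C t) * q).natDegree = 1 + q.natDegree := by
          rw [natDegree_mul (X_sub_C_ne_zero t) hq0, natDegree_X_sub_C]
        rw [hq, h3] at h2
        omega
      have hT' : (T \ {t}).Infinite := hT.diff (Set.finite_singleton t)
      have hqval : ∀ x ∈ T \ {t}, q.eval x ∈ M := by
        rintro x ⟨hx, hxt⟩
        have hxt' : x - t ≠ 0 := sub_ne_zero.mpr (by simpa using hxt)
        have he : g.eval x - g.eval t = (x - t) * q.eval x := by
          have := congrArg (eval x) hq
          simpa using this
        have : q.eval x = (x - t)⁻¹ * (g.eval x - g.eval t) := by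
          field_simp [he]
          rw [he]; ring
        rw [this]
        exact mul_mem (inv_mem (sub_mem (hTM x hx) (hTM t ht)))
          (sub_mem (hval x hx) (hval t ht))
      have hqcoeff : ∀ i, q.coeff i ∈ M :=
        ih q hdeg (T \ {t}) hT' (fun x hx => hTM x hx.1) hqval
      -- g = (X - C t) * q + C (g.eval t)
      have hg' : g = (X - C t) * q + C (g.eval t) := by
        rw [← hq]; ring
      have hxq : ∀ j, ((X - C t) * q).coeff j ∈ M := by
        intro j
        rw [sub_mul]
        rcases j with _ | j
        · have h5 : (X * q - C t * q).coeff 0 = 0 - t * q.coeff 0 := by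
            simp
          rw [h5]
          exact sub_mem (zero_mem M) (mul_mem (hTM t ht) (hqcoeff 0))
        · rw [coeff_sub, coeff_X_mul, coeff_C_mul]
          exact sub_mem (hqcoeff j) (mul_mem (hTM t ht) (hqcoeff (j+1)))
      rw [hg', coeff_add]
      refine add_mem (hxq i) ?_
      rw [coeff_C]
      split
      · exact hval t ht
      · exact zero_mem M


variable {L : Type*} [Field L]

lemma aux_coeff_sum (c : ℕ → L) (n j : ℕ) :
    (∑ i ∈ Finset.range n, C (c i) * X ^ i).coeff j = if j < n then c j else 0 := by
  rw [finset_sum_coeff]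
  simp only [coeff_C_mul, coeff_X_pow, mul_ite, mul_one, mul_zero]
  rw [Finset.sum_ite_eq (Finset.range n) j c]
  simp [Finset.mem_range]

lemma aux_eval_sum (c : ℕ → L) (n : ℕ) (a : L) :
    (∑ i ∈ Finset.range n, C (c i) * X ^ i).eval a = ∑ i ∈ Finset.range n, c i * a ^ i := by
  simp [eval_finset_sum]

end Aux


/-- `L/M` is purely inseparable of finite exponent: either `L = M` (the trivial,
characteristic-zero, form), or `char L = p > 0` and there is `e` with `a^{p^e} ∈ M`
for all `a ∈ L`. -/
def PurelyInsepFinExp {L : Type*} [Field L] (M : Subfield L) : Prop :=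
  (∀ a : L, a ∈ M) ∨
    ∃ p e : ℕ, p.Prime ∧ CharP L p ∧ ∀ a : L, a ^ p ^ e ∈ M

theorem stmt12 {L : Type*} [Field L] [Infinite L] (M : Subfield L)
    (h : ¬ PurelyInsepFinExp M) :
    ¬ ∃ f : Polynomial L, (∀ i, f.coeff i ∈ M) ∧ 0 < f.natDegree ∧
      {d : L | f.eval d ∉ M}.Finite := by
  rintro ⟨f, hcoeff, hdeg, hfin⟩
  apply h; clear h
  show (∀ a : L, a ∈ M) ∨
    ∃ p e : ℕ, p.Prime ∧ CharP L p ∧ ∀ a : L, a ^ p ^ e ∈ M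
  -- Step A : M is infinite
  have hMinf : ((M : Set L)).Infinite := by
    intro hfin'
    have hgood : {d : L | f.eval d ∈ M}.Finite := by
      have hsub : {d : L | f.eval d ∈ M} ⊆
          ⋃ m ∈ (M : Set L), {x : L | (f - C m).IsRoot x} := by
        intro d hd
        exact Set.mem_biUnion hd (by simp [IsRoot])
      refine Set.Finite.subset (Set.Finite.biUnion hfin' ?_) hsub
      intro m _
      apply finite_setOf_isRoot
      intro h0
      have hd : (f - C m).natDegree = f.natDegree := natDegree_sub_C
      rw [h0, natDegree_zero] at hd
      omega
    have huniv : (Set.univ : Set L).Finite := by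
      refine (hgood.union hfin).subset ?_
      intro x _
      by_cases hx : f.eval x ∈ M
      · exact Or.inl hx
      · exact Or.inr hx
    exact Set.infinite_univ huniv
  -- translated coefficients for f
  have hcompf : ∀ a : L, ∀ i, (f.comp (X + C a)).coeff i ∈ M := by
    intro a
    have hTinf : ((M : Set L) \ ((fun x => x + a) ⁻¹' {d : L | f.eval d ∉ M})).Infinite :=
      hMinf.diff (hfin.preimage ((add_left_injective a).injOn))
    refine aux_coeff_mem M _ _ le_rfl _ hTinf (fun x hx => hx.1) ?_
    intro x hx
    have hx2 : f.eval (x + a) ∈ M := not_not.mp hx.2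
    simpa [eval_comp] using hx2
  have hfall : ∀ a : L, f.eval a ∈ M := by
    intro a
    have h0 := hcompf a 0
    rwa [← taylor_apply, taylor_coeff_zero] at h0
  -- the class of good polynomials
  set G : L[X] → Prop := fun g => (∀ i, g.coeff i ∈ M) ∧ ∀ a : L, g.eval a ∈ M with hGdef
  have hGf : G f := ⟨hcoeff, hfall⟩
  have hGcomp : ∀ g : L[X], G g → ∀ (a : L) (i : ℕ), (g.comp (X + C a)).coeff i ∈ M := by
    intro g hg a
    refine aux_coeff_mem M _ _ le_rfl (M : Set L) hMinf (fun x hx => hx) ?_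
    intro x _
    simpa [eval_comp] using hg.2 (x + a)
  -- minimal degree
  set D := {k : ℕ | 1 ≤ k ∧ ∃ g : L[X], G g ∧ g.natDegree = k} with hDdef
  have hDne : D.Nonempty := ⟨f.natDegree, hdeg, f, hGf, rfl⟩
  obtain ⟨hm1, g, hGg, hgdeg⟩ : sInf D ∈ D := Nat.sInf_mem hDne
  set m := sInf D with hmdef
  have hmin : ∀ q : L[X], G q → 1 ≤ q.natDegree → m ≤ q.natDegree :=
    fun q hq h1 => Nat.sInf_le ⟨h1, q, hq, rfl⟩
  have hg0 : g ≠ 0 := by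
    intro h0; rw [h0, natDegree_zero] at hgdeg; omega
  have hcm : g.coeff m ≠ 0 := by
    rw [← hgdeg]; exact mt leadingCoeff_eq_zero.mp hg0
  -- Step E1 : the support of g is {0, m}
  have hsupp : ∀ i, 1 ≤ i → i < m → g.coeff i = 0 := by
    intro i hi1 him
    by_contra hne
    have hex : ∃ l : L, l ∈ M ∧ l ^ i ≠ l ^ m := by
      by_contra hall
      push_neg at hall
      have hne0 : ((X : L[X]) ^ m - X ^ i) ≠ 0 := by
        intro h0
        have hc := congrArg (fun p => Polynomial.coeff p m) h0
        simp [coeff_X_pow, Nat.ne_of_gt him] at hc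
      refine hMinf (Set.Finite.subset (finite_setOf_isRoot hne0) ?_)
      intro x hx
      simp only [Set.mem_setOf_eq, IsRoot, eval_sub, eval_pow, eval_X]
      rw [hall x hx]
      ring
    obtain ⟨l, hlM, hlne⟩ := hex
    set gl : L[X] := ∑ j ∈ Finset.range (m + 1), C (g.coeff j * (l ^ j - l ^ m)) * X ^ j
      with hgl
    have hcoeffgl : ∀ j, gl.coeff j =
        if j < m + 1 then g.coeff j * (l ^ j - l ^ m) else 0 := fun j => aux_coeff_sum _ _ j
    have hevalgl : ∀ a : L, gl.eval a = g.eval (l * a) - l ^ m * g.eval a := by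
      intro a
      rw [hgl, aux_eval_sum]
      rw [eval_eq_sum_range (x := l * a), eval_eq_sum_range (x := a), hgdeg, Finset.mul_sum,
        ← Finset.sum_sub_distrib]
      refine Finset.sum_congr rfl fun j _ => by ring
    have hGgl : G gl := by
      constructor
      · intro j
        rw [hcoeffgl]
        split
        · exact mul_mem (hGg.1 j) (sub_mem (pow_mem hlM j) (pow_mem hlM m))
        · exact zero_mem M
      · intro a
        rw [hevalgl]
        exact sub_mem (hGg.2 (l * a)) (mul_mem (pow_mem hlM m) (hGg.2 a))
    have hdegl : gl.natDegree ≤ m - 1 := by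
      rw [natDegree_le_iff_coeff_eq_zero]
      intro j hj
      rw [hcoeffgl]
      split
      · rcases Nat.lt_or_ge j m with hjm | hjm
        · omega
        · have : j = m := by omega
          rw [this, sub_self, mul_zero]
      · rfl
    have hdegl0 : gl.natDegree = 0 := by
      by_contra hd0
      have := hmin gl hGgl (by omega)
      omega
    have hz : gl.coeff i = 0 := coeff_eq_zero_of_natDegree_lt (by omega)
    rw [hcoeffgl, if_pos (by omega)] at hz
    rcases mul_eq_zero.mp hz with h1 | h2
    · exact hne h1
    · exact hlne (by linear_combination h2)
  -- every a^m lies in M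
  have hpowm : ∀ a : L, a ^ m ∈ M := by
    intro a
    have heval : g.eval a = g.coeff 0 + g.coeff m * a ^ m := by
      rw [eval_eq_sum_range, hgdeg]
      rw [← Finset.sum_subset (s₁ := ({0, m} : Finset ℕ))
        (by intro x hx; simp only [Finset.mem_insert, Finset.mem_singleton] at hx
            rcases hx with rfl | rfl <;> simp [Finset.mem_range] <;> omega)
        (by intro x hx hx2
            simp only [Finset.mem_insert, Finset.mem_singleton, not_or] at hx2
            rw [hsupp x (by omega) (by simp [Finset.mem_range] at hx; omega), zero_mul])]
      rw [Finset.sum_pair (by omega : (0 : ℕ) ≠ m)]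
      simp
    have ham : a ^ m = (g.eval a - g.coeff 0) * (g.coeff m)⁻¹ := by
      rw [heval]
      field_simp
      ring
    rw [ham]
    exact mul_mem (sub_mem (hGg.2 a) (hGg.1 0)) (inv_mem (hGg.1 m))
  rcases eq_or_lt_of_le hm1 with h1 | h2
  · left
    intro a
    have := hpowm a
    rwa [← h1, pow_one] at this
  · -- m ≥ 2 : characteristic analysis
    have hbin : ∀ k, 0 < k → k < m → ((m.choose k : L)) = 0 := by
      intro k hk hkm
      set gk := hasseDeriv k g with hgk
      have hGgk : G gk := by
        constructor
        · intro j
          rw [hgk, hasseDeriv_coeff]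
          exact mul_mem (natCast_mem M _) (hGg.1 _)
        · intro a
          have := hGcomp g hGg a k
          rwa [← taylor_apply, taylor_coeff] at this
      have hdk : gk.natDegree ≤ m - k := by
        rw [← hgdeg]; exact natDegree_hasseDeriv_le g k
      have hdk0 : gk.natDegree = 0 := by
        by_contra hd0
        have := hmin gk hGgk (by omega)
        omega
      have hz : gk.coeff (m - k) = 0 := coeff_eq_zero_of_natDegree_lt (by omega)
      rw [hgk, hasseDeriv_coeff] at hz
      have hmk : m - k + k = m := by omega
      rw [hmk] at hz
      rcases mul_eq_zero.mp hz with h1 | h2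
      · exact h1
      · exact absurd h2 hcm
    -- the characteristic is a prime p
    set p := ringChar L with hp
    rcases CharP.char_is_prime_or_zero L p with hprime | hzero
    · right
      have hdvd : ∀ k, 0 < k → k < m → p ∣ m.choose k := by
        intro k hk hkm
        exact (CharP.cast_eq_zero_iff L p _).mp (hbin k hk hkm)
      obtain ⟨e, he⟩ := aux_pow_of_dvd_choose hprime hm1 hdvd
      exact ⟨p, e, hprime, ringChar.charP L, fun a => by rw [← he]; exact hpowm a⟩
    · exfalso
      have hm0 : ((m.choose 1 : ℕ) : L) = 0 := hbin 1 (by omega) (by omega)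
      rw [Nat.choose_one_right] at hm0
      have := (CharP.cast_eq_zero_iff L p m).mp hm0
      rw [hzero] at this
      simp at this
      omega
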